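/- (Frink–Schroeder) Let X be a nonempty set and d : X × X → [0,∞) satisfy: (i) d(x,y) = 0 iff x = y, (ii) d(x,y) = d(y,x), and (iii') d(x,y) ≤ λ·max{d(x,z), d(y,z)} for all x,y,z ∈ X, for some 1 ≤ λ ≤ 2. Define ρ(x,y) = inf{ Σ_{i=1}^{n} d(x_{i−1},x_i) : n ∈ ℕ, x = x₀, x₁, …, xₙ = y is a chain in X }. Then ρ is a metric on X and (1/(2λ))·d(x,y) ≤ ρ(x,y) ≤ d(x,y) for all x,y ∈ X. -/

import Mathlib

open Finset


lemma frink_region {X : Type*} (d : X → X → ℝ) (lam : ℝ) (hlam1 : 1 ≤ lam)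
    (hnn : ∀ x y, 0 ≤ d x y) (hsymm : ∀ x y, d x y = d y x)
    (htri : ∀ x y z, d x y ≤ lam * max (d x z) (d y z)) :
    ∀ (M : ℕ), ∀ (n j L R : ℕ) (c : ℕ → X) (ℓ m : ℕ → ℕ),
      1 ≤ n →
      (∑ i ∈ Finset.range n, (ℓ i - j)) ≤ M →
      (∀ i, i < n → j ≤ ℓ i ∧ ℓ i ≤ L) →
      (∀ i, i < n → R * 2 ^ (L - j) ≤ m i * 2 ^ (L - ℓ i) ∧
          (m i + 1) * 2 ^ (L - ℓ i) ≤ (R + 1) * 2 ^ (L - j)) →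
      (∀ i, i + 1 < n → (m i + 1) * 2 ^ (L - ℓ i) ≤ m (i + 1) * 2 ^ (L - ℓ (i + 1))) →
      ∃ i, i < n ∧ d (c 0) (c n) ≤ lam ^ (ℓ i - j) * d (c i) (c (i + 1)) := by
  intro M
  induction M using Nat.strong_induction_on with
  | _ M ih =>
  intro n j L R c ℓ m hn hM hℓ hb hmono
  rcases eq_or_lt_of_le hn with hn1 | hn2
  · -- base case n = 1
    refine ⟨0, by omega, ?_⟩
    have h1 : (1:ℝ) ≤ lam ^ (ℓ 0 - j) := one_le_pow₀ hlam1
    have h0 : (0:ℝ) ≤ d (c 0) (c 1) := hnn _ _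
    have : c n = c 1 := by rw [← hn1]
    rw [this]
    nlinarith
  · -- n ≥ 2
    have hn2' : 2 ≤ n := hn2
    have hpair : ∀ a, a + 1 < n →
        2 ^ (L - ℓ a) + 2 ^ (L - ℓ (a+1)) ≤ 2 ^ (L - j) := by
      intro a ha
      have h1 := (hb a (by omega)).1
      have h2 := hmono a ha
      have h3 := (hb (a+1) (by omega)).2
      have e1 : (m a + 1) * 2 ^ (L - ℓ a) = m a * 2 ^ (L - ℓ a) + 2 ^ (L - ℓ a) := by ring
      have e2 : (m (a+1) + 1) * 2 ^ (L - ℓ (a+1))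
          = m (a+1) * 2 ^ (L - ℓ (a+1)) + 2 ^ (L - ℓ (a+1)) := by ring
      have e3 : (R + 1) * 2 ^ (L - j) = R * 2 ^ (L - j) + 2 ^ (L - j) := by ring
      rw [e1] at h2
      rw [e2, e3] at h3
      omega
    have hj1 : ∀ i, i < n → j + 1 ≤ ℓ i := by
      intro i hi
      have hW : 2 ^ (L - ℓ i) < 2 ^ (L - j) := by
        rcases lt_or_ge (i+1) n with h | h
        · have h1 := hpair i h
          have h2 : 0 < 2 ^ (L - ℓ (i+1)) := Nat.pow_pos (by norm_num)
          omega
        · have hi1 : n - 2 + 1 = i := by omega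
          have h1 := hpair (n-2) (by omega)
          rw [hi1] at h1
          have h2 : 0 < 2 ^ (L - ℓ (n-2)) := Nat.pow_pos (by norm_num)
          omega
      have hiL := (hℓ i hi).2
      have hij := (hℓ i hi).1
      have := (Nat.pow_lt_pow_iff_right (a := 2) (by norm_num)).1 hW
      omega
    have hsum1 : (∑ i ∈ Finset.range n, (ℓ i - (j+1))) + n
        ≤ ∑ i ∈ Finset.range n, (ℓ i - j) := by
      calc (∑ i ∈ Finset.range n, (ℓ i - (j+1))) + n
          = ∑ i ∈ Finset.range n, ((ℓ i - (j+1)) + 1) := by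
            rw [Finset.sum_add_distrib, Finset.sum_const, Finset.card_range, smul_eq_mul,
              mul_one]
        _ ≤ ∑ i ∈ Finset.range n, (ℓ i - j) := by
            apply Finset.sum_le_sum
            intro i hi
            have := hj1 i (Finset.mem_range.1 hi)
            omega
    have hMlt : (∑ i ∈ Finset.range n, (ℓ i - (j+1))) < M := by omega
    classical
    have hex : ∃ k, n ≤ k ∨ (2*R+1) * 2 ^ (L - (j+1)) ≤ m k * 2 ^ (L - ℓ k) :=
      ⟨n, Or.inl le_rfl⟩
    set k₀ := Nat.find hex with hk₀def
    have hk₀le : k₀ ≤ n := Nat.find_le (Or.inl le_rfl)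
    have hbefore : ∀ i, i < k₀ → m i * 2 ^ (L - ℓ i) < (2*R+1) * 2 ^ (L - (j+1)) := by
      intro i hi
      have := Nat.find_min hex hi
      push_neg at this
      exact this.2
    have hafter : ∀ i, k₀ ≤ i → i < n → (2*R+1) * 2 ^ (L - (j+1)) ≤ m i * 2 ^ (L - ℓ i) := by
      have pstep : ∀ a, a + 1 < n → m a * 2 ^ (L - ℓ a) ≤ m (a+1) * 2 ^ (L - ℓ (a+1)) := by
        intro a ha
        have h1 := hmono a ha
        exact le_trans (Nat.mul_le_mul_right _ (Nat.le_succ (m a))) h1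
      have pmono : ∀ b, b < n → ∀ a, a ≤ b → m a * 2 ^ (L - ℓ a) ≤ m b * 2 ^ (L - ℓ b) := by
        intro b
        induction b with
        | zero =>
          intro _ a ha
          have : a = 0 := by omega
          subst this
          exact le_rfl
        | succ b ihb =>
          intro hb a ha
          rcases eq_or_lt_of_le ha with h | h
          · rw [h]
          · exact le_trans (ihb (by omega) a (by omega)) (pstep b hb)
      intro i hki hin
      rcases Nat.find_spec hex with h | h
      · omega
      · exact le_trans h (pmono i hin k₀ hki)
    have halign : ∀ i, i < n → m i * 2 ^ (L - ℓ i) < (2*R+1) * 2 ^ (L - (j+1)) →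
        (m i + 1) * 2 ^ (L - ℓ i) ≤ (2*R+1) * 2 ^ (L - (j+1)) := by
      intro i hin hlt
      have hle : ℓ i ≤ L := (hℓ i hin).2
      have hj1i := hj1 i hin
      have efac : (2*R+1) * 2 ^ (L - (j+1))
          = ((2*R+1) * 2 ^ (ℓ i - (j+1))) * 2 ^ (L - ℓ i) := by
        rw [mul_assoc, ← pow_add]
        congr 2
        omega
      rw [efac] at hlt ⊢
      have hq : m i < (2*R+1) * 2 ^ (ℓ i - (j+1)) := by
        by_contra hcon
        push_neg at hcon
        exact absurd (Nat.mul_le_mul_right (2 ^ (L - ℓ i)) hcon) (by omega)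
      exact Nat.mul_le_mul_right _ (by omega)
    have hpow2 : ∀ i, i < n → (R + 1) * 2 ^ (L - j) = ((2*R+1) + 1) * 2 ^ (L - (j+1)) := by
      intro i hi
      have hjL : j + 1 ≤ L := le_trans (hj1 i hi) (hℓ i hi).2
      have : L - j = (L - (j+1)) + 1 := by omega
      rw [this, pow_succ]
      ring
    have hpow2' : R * 2 ^ (L - j) = (2*R) * 2 ^ (L - (j+1)) := by
      rcases Nat.eq_zero_or_pos R with h | h
      · simp [h]
      · have hjL : j + 1 ≤ L := le_trans (hj1 0 (by omega)) (hℓ 0 (by omega)).2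
        have : L - j = (L - (j+1)) + 1 := by omega
        rw [this, pow_succ]
        ring
    rcases Nat.eq_zero_or_pos k₀ with hk0 | hk0pos
    · -- all in right half
      have hrec := ih (M-1) (by omega) n (j+1) L (2*R+1) c ℓ m hn (by omega)
        (fun i hi => ⟨hj1 i hi, (hℓ i hi).2⟩)
        (fun i hi => ⟨hafter i (by omega) hi, by rw [← hpow2 i hi]; exact (hb i hi).2⟩)
        hmono
      obtain ⟨i, hi, hdi⟩ := hrec
      refine ⟨i, hi, le_trans hdi ?_⟩
      exact mul_le_mul_of_nonneg_right (pow_le_pow_right₀ hlam1 (by omega)) (hnn _ _)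
    · rcases eq_or_lt_of_le hk₀le with hkn | hkn
      · -- all in left half
        have hrec := ih (M-1) (by omega) n (j+1) L (2*R) c ℓ m hn (by omega)
          (fun i hi => ⟨hj1 i hi, (hℓ i hi).2⟩)
          (fun i hi => ⟨by rw [← hpow2']; exact (hb i hi).1,
            le_trans (halign i hi (hbefore i (by omega))) (by omega)⟩)
          hmono
        obtain ⟨i, hi, hdi⟩ := hrec
        refine ⟨i, hi, le_trans hdi ?_⟩
        exact mul_le_mul_of_nonneg_right (pow_le_pow_right₀ hlam1 (by omega)) (hnn _ _)
      · -- split at k₀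
        have hleft := ih (M-1) (by omega) k₀ (j+1) L (2*R) c ℓ m (by omega)
          (by
            have hsub : ∑ i ∈ Finset.range k₀, (ℓ i - (j+1))
                ≤ ∑ i ∈ Finset.range n, (ℓ i - (j+1)) :=
              Finset.sum_le_sum_of_subset (Finset.range_subset_range.2 (by omega))
            omega)
          (fun i hi => ⟨hj1 i (by omega), (hℓ i (by omega)).2⟩)
          (fun i hi => ⟨by rw [← hpow2']; exact (hb i (by omega)).1,
            halign i (by omega) (hbefore i hi)⟩)
          (fun i hi => hmono i (by omega))
        obtain ⟨a, ha, hda⟩ := hleft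
        have hright := ih (M-1) (by omega) (n - k₀) (j+1) L (2*R+1)
          (fun t => c (k₀ + t)) (fun t => ℓ (k₀ + t)) (fun t => m (k₀ + t)) (by omega)
          (by
            show (∑ i ∈ Finset.range (n - k₀), (ℓ (k₀ + i) - (j + 1))) ≤ M - 1
            have e := Finset.sum_Ico_eq_sum_range (fun i => ℓ i - (j+1)) k₀ n
            have hsub : ∑ i ∈ Finset.Ico k₀ n, (ℓ i - (j+1))
                ≤ ∑ i ∈ Finset.range n, (ℓ i - (j+1)) := by
              rw [Finset.range_eq_Ico]
              exact Finset.sum_le_sum_of_subset (Finset.Ico_subset_Ico (Nat.zero_le _) le_rfl)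
            omega)
          (fun i hi => ⟨hj1 (k₀+i) (by omega), (hℓ (k₀+i) (by omega)).2⟩)
          (fun i hi => ⟨hafter (k₀+i) (by omega) (by omega),
            by rw [← hpow2 (k₀+i) (by omega)]; exact (hb (k₀+i) (by omega)).2⟩)
          (fun i hi => hmono (k₀+i) (by omega))
        obtain ⟨b, hbn, hdb⟩ := hright
        have hdb' : d (c k₀) (c (k₀ + (n - k₀)))
            ≤ lam ^ (ℓ (k₀ + b) - (j+1)) * d (c (k₀ + b)) (c (k₀ + b + 1)) := hdb
        have en : k₀ + (n - k₀) = n := by omega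
        rw [en] at hdb'
        have hlam0 : (0:ℝ) ≤ lam := by linarith
        have htr : d (c 0) (c n) ≤ lam * max (d (c 0) (c k₀)) (d (c k₀) (c n)) := by
          have h := htri (c 0) (c n) (c k₀)
          rwa [hsymm (c n) (c k₀)] at h
        rcases le_total (d (c 0) (c k₀)) (d (c k₀) (c n)) with hmx | hmx
        · refine ⟨k₀ + b, by omega, ?_⟩
          have hmax : max (d (c 0) (c k₀)) (d (c k₀) (c n)) = d (c k₀) (c n) :=
            max_eq_right hmx
          rw [hmax] at htr
          have h2 : lam * d (c k₀) (c n)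
              ≤ lam * (lam ^ (ℓ (k₀+b) - (j+1)) * d (c (k₀+b)) (c (k₀+b+1))) :=
            mul_le_mul_of_nonneg_left hdb' hlam0
          have e2 : ℓ (k₀+b) - j = (ℓ (k₀+b) - (j+1)) + 1 := by
            have := hj1 (k₀+b) (by omega); omega
          calc d (c 0) (c n) ≤ lam * (lam ^ (ℓ (k₀+b) - (j+1)) * d (c (k₀+b)) (c (k₀+b+1))) :=
                le_trans htr h2
            _ = lam ^ (ℓ (k₀+b) - j) * d (c (k₀+b)) (c (k₀+b+1)) := by
                rw [e2, pow_succ]; ring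
        · refine ⟨a, by omega, ?_⟩
          have hmax : max (d (c 0) (c k₀)) (d (c k₀) (c n)) = d (c 0) (c k₀) :=
            max_eq_left hmx
          rw [hmax] at htr
          have h2 : lam * d (c 0) (c k₀)
              ≤ lam * (lam ^ (ℓ a - (j+1)) * d (c a) (c (a+1))) :=
            mul_le_mul_of_nonneg_left hda hlam0
          have e2 : ℓ a - j = (ℓ a - (j+1)) + 1 := by
            have := hj1 a (by omega); omega
          calc d (c 0) (c n) ≤ lam * (lam ^ (ℓ a - (j+1)) * d (c a) (c (a+1))) :=
                le_trans htr h2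
            _ = lam ^ (ℓ a - j) * d (c a) (c (a+1)) := by
                rw [e2, pow_succ]; ring


lemma frink_chain_ultra {X : Type*} (d : X → X → ℝ)
    (hnn : ∀ x y, 0 ≤ d x y) (hsymm : ∀ x y, d x y = d y x)
    (htri1 : ∀ x y z, d x y ≤ max (d x z) (d y z)) :
    ∀ (n : ℕ) (c : ℕ → X), 1 ≤ n →
      d (c 0) (c n) ≤ ∑ i ∈ Finset.range n, d (c i) (c (i + 1)) := by
  intro n
  induction n with
  | zero => intro c h; omega
  | succ n ihn =>
    intro c h1
    rcases Nat.eq_zero_or_pos n with h0 | h0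
    · subst h0
      rw [Finset.sum_range_one]
    · have hsum0 : 0 ≤ ∑ i ∈ Finset.range n, d (c i) (c (i + 1)) :=
        Finset.sum_nonneg fun i _ => hnn _ _
      have htot : ∑ i ∈ Finset.range (n+1), d (c i) (c (i + 1))
          = (∑ i ∈ Finset.range n, d (c i) (c (i + 1))) + d (c n) (c (n+1)) :=
        Finset.sum_range_succ _ _
      have h2 := htri1 (c 0) (c (n+1)) (c n)
      have h3 := ihn c h0
      have h4 : d (c (n+1)) (c n) = d (c n) (c (n+1)) := hsymm _ _
      have h5 : 0 ≤ d (c n) (c (n+1)) := hnn _ _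
      rw [htot]
      rcases max_cases (d (c 0) (c n)) (d (c (n+1)) (c n)) with ⟨he, _⟩ | ⟨he, _⟩ <;>
        rw [he] at h2 <;> linarith


lemma frink_chain {X : Type*} (d : X → X → ℝ) (lam : ℝ) (hlam1 : 1 ≤ lam) (hlam2 : lam ≤ 2)
    (hnn : ∀ x y, 0 ≤ d x y) (hsymm : ∀ x y, d x y = d y x)
    (htri : ∀ x y z, d x y ≤ lam * max (d x z) (d y z)) :
    ∀ (n : ℕ) (c : ℕ → X), 1 ≤ n →
      d (c 0) (c n) ≤ 2 * lam * ∑ i ∈ Finset.range n, d (c i) (c (i + 1)) := by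
  intro n c hn
  have hlam0 : (0:ℝ) < lam := by linarith
  have hS0 : 0 ≤ ∑ i ∈ Finset.range n, d (c i) (c (i + 1)) :=
    Finset.sum_nonneg fun i _ => hnn _ _
  rcases eq_or_lt_of_le hlam1 with h1 | h1
  · -- lam = 1
    have htri1 : ∀ x y z, d x y ≤ max (d x z) (d y z) := by
      intro x y z
      have := htri x y z
      rw [← h1] at this
      linarith [this]
    have := frink_chain_ultra d hnn hsymm htri1 n c hn
    nlinarith
  · -- 1 < lam
    apply le_of_forall_pos_le_add
    intro ε' hε'
    have hn0 : (0:ℝ) < (n:ℝ) := by exact_mod_cast hn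
    have h2ln : (0:ℝ) < 2 * lam * (n:ℝ) := by positivity
    set ε := ε' / (2 * lam * (n:ℝ)) with hεdef
    have hε : 0 < ε := div_pos hε' h2ln
    set e : ℕ → ℝ := fun i => d (c i) (c (i+1)) + ε with hedef
    have he0 : ∀ i, 0 < e i := fun i => add_pos_of_nonneg_of_pos (hnn _ _) hε
    set σ := ∑ i ∈ Finset.range n, e i with hσdef
    have hσ0 : 0 < σ :=
      Finset.sum_pos (fun i _ => he0 i) (Finset.nonempty_range_iff.2 (by omega))
    have heσ : ∀ i, i < n → e i ≤ σ := by
      intro i hi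
      exact Finset.single_le_sum (fun t _ => (he0 t).le) (Finset.mem_range.2 hi)
    have hex : ∀ i : ℕ, ∃ k : ℕ, 2 * lam * σ / e i < lam ^ (k + 1) := by
      intro i
      obtain ⟨k, hk⟩ := pow_unbounded_of_one_lt (2 * lam * σ / e i) h1
      exact ⟨k, lt_of_lt_of_le hk (pow_le_pow_right₀ (le_of_lt h1) (Nat.le_succ k))⟩
    set ℓ : ℕ → ℕ := fun i => Nat.find (hex i) with hℓdef
    have hfind : ∀ i, 2 * lam * σ / e i < lam ^ (ℓ i + 1) := fun i => Nat.find_spec (hex i)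
    have hCge : ∀ i, i < n → 2 * lam ≤ 2 * lam * σ / e i := by
      intro i hi
      rw [le_div_iff₀ (he0 i)]
      have := heσ i hi
      nlinarith
    have hlow : ∀ i, i < n → lam ^ (ℓ i) ≤ 2 * lam * σ / e i := by
      intro i hi
      rcases Nat.eq_zero_or_pos (ℓ i) with h0 | h0
      · rw [h0, pow_zero]
        have := hCge i hi
        linarith
      · have hh := Nat.find_min (hex i) (show ℓ i - 1 < ℓ i by omega)
        push_neg at hh
        have e1 : ℓ i - 1 + 1 = ℓ i := by omega
        rwa [e1] at hh
    have hup : ∀ i, i < n → lam ^ (ℓ i) * e i ≤ 2 * lam * σ := by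
      intro i hi
      have h2 := mul_le_mul_of_nonneg_right (hlow i hi) (he0 i).le
      rwa [div_mul_cancel₀ _ (ne_of_gt (he0 i))] at h2
    have hdown : ∀ i, i < n → 2 * σ < 2 ^ (ℓ i) * e i := by
      intro i hi
      have h2 : 2 * lam * σ < lam ^ (ℓ i + 1) * e i := by
        have := (div_lt_iff₀ (he0 i)).1 (hfind i)
        linarith
      rw [pow_succ] at h2
      have h3 : 2 * σ < lam ^ (ℓ i) * e i := by
        have hl : 0 < lam := hlam0
        nlinarith
      have h4 : lam ^ (ℓ i) ≤ 2 ^ (ℓ i) := pow_le_pow_left₀ (by linarith) hlam2 _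
      nlinarith [(he0 i).le]
    set L := (Finset.range n).sup ℓ with hLdef
    have hℓL : ∀ i, i < n → ℓ i ≤ L := fun i hi => Finset.le_sup (Finset.mem_range.2 hi)
    have hl1 : ∀ i, i < n → 1 ≤ ℓ i := by
      intro i hi
      by_contra hcon
      push_neg at hcon
      have h0 : ℓ i = 0 := by omega
      have := hfind i
      rw [h0, pow_one] at this
      have := hCge i hi
      linarith
    have hL1 : 1 ≤ L := le_trans (hl1 0 (by omega)) (hℓL 0 (by omega))
    -- Kraft inequality in ℕ
    have hkraftR : (∑ i ∈ Finset.range n, (2:ℝ) ^ (L - ℓ i)) < 2 ^ (L - 1) := by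
      have hterm : ∀ i ∈ Finset.range n,
          (2:ℝ) ^ (L - ℓ i) < 2 ^ L * e i / (2 * σ) := by
        intro i hi
        have hi' := Finset.mem_range.1 hi
        rw [lt_div_iff₀ (by linarith : (0:ℝ) < 2 * σ)]
        have h2 := mul_lt_mul_of_pos_left (hdown i hi') (show (0:ℝ) < 2 ^ (L - ℓ i) by positivity)
        calc (2:ℝ) ^ (L - ℓ i) * (2 * σ) < 2 ^ (L - ℓ i) * (2 ^ (ℓ i) * e i) := h2
          _ = 2 ^ L * e i := by
              rw [← mul_assoc, ← pow_add]
              congr 2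
              have := hℓL i hi'
              omega
      calc (∑ i ∈ Finset.range n, (2:ℝ) ^ (L - ℓ i))
          < ∑ i ∈ Finset.range n, 2 ^ L * e i / (2 * σ) :=
            Finset.sum_lt_sum_of_nonempty (Finset.nonempty_range_iff.2 (by omega)) hterm
        _ = 2 ^ L / (2 * σ) * σ := by
            rw [← Finset.sum_div, ← Finset.mul_sum, ← hσdef]
            ring
        _ = 2 ^ (L-1) := by
            have : (2:ℝ) ^ L = 2 ^ (L-1) * 2 := by
              rw [← pow_succ]
              congr 1
              omega
            rw [this]
            field_simp
    have hkraftN : (∑ i ∈ Finset.range n, 2 ^ (L - ℓ i)) ≤ 2 ^ (L - 1) := by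
      have hc : ((∑ i ∈ Finset.range n, 2 ^ (L - ℓ i) : ℕ) : ℝ)
          = ∑ i ∈ Finset.range n, (2:ℝ) ^ (L - ℓ i) := by
        push_cast
        rfl
      have hc2 : ((2 ^ (L-1) : ℕ) : ℝ) = (2:ℝ) ^ (L-1) := by push_cast; rfl
      have := hkraftR
      rw [← hc, ← hc2] at this
      exact_mod_cast this.le
    -- positions
    set W : ℕ → ℕ := fun i => ∑ t ∈ Finset.range i, 2 ^ (L - ℓ t) with hWdef
    set mm : ℕ → ℕ := fun i => 2 * W i / 2 ^ (L - ℓ i) + 1 with hmdef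
    have hw0 : ∀ i, 0 < 2 ^ (L - ℓ i) := fun i => Nat.pow_pos (by norm_num)
    have hp1 : ∀ i, 2 * W i < mm i * 2 ^ (L - ℓ i) := by
      intro i
      have hdm := Nat.div_add_mod (2 * W i) (2 ^ (L - ℓ i))
      have hml := Nat.mod_lt (2 * W i) (hw0 i)
      have e1 : mm i * 2 ^ (L - ℓ i)
          = 2 ^ (L - ℓ i) * (2 * W i / 2 ^ (L - ℓ i)) + 2 ^ (L - ℓ i) := by
        rw [hmdef]
        ring
      omega
    have hp2 : ∀ i, mm i * 2 ^ (L - ℓ i) ≤ 2 * W i + 2 ^ (L - ℓ i) := by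
      intro i
      have hds : (2 * W i / 2 ^ (L - ℓ i)) * 2 ^ (L - ℓ i) ≤ 2 * W i :=
        Nat.div_mul_le_self _ _
      have e1 : mm i * 2 ^ (L - ℓ i)
          = (2 * W i / 2 ^ (L - ℓ i)) * 2 ^ (L - ℓ i) + 2 ^ (L - ℓ i) := by
        rw [hmdef]
        ring
      omega
    have hWsucc : ∀ i, W (i+1) = W i + 2 ^ (L - ℓ i) := fun i => Finset.sum_range_succ _ _
    have hWmono : ∀ i, i ≤ n → W i ≤ W n := by
      intro i hi
      exact Finset.sum_le_sum_of_subset (Finset.range_subset_range.2 hi)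
    have hWn : W n ≤ 2 ^ (L - 1) := hkraftN
    have h2L : (2:ℕ) ^ L = 2 * 2 ^ (L - 1) := by
      conv_lhs => rw [show L = (L - 1) + 1 by omega]
      rw [pow_succ]
      ring
    have hreg := frink_region d lam hlam1 hnn hsymm htri
      (∑ i ∈ Finset.range n, ℓ i) n 0 L 0 c ℓ mm hn
      (by simp)
      (fun i hi => ⟨Nat.zero_le _, hℓL i hi⟩)
      (by
        intro i hi
        constructor
        · simp
        · have e1 : (0 + 1) * 2 ^ (L - 0) = 2 ^ L := by simp
          rw [e1]
          have h2 := hp2 i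
          have h3 := hWsucc i
          have h4 := hWmono (i+1) (by omega)
          have e2 : (mm i + 1) * 2 ^ (L - ℓ i) = mm i * 2 ^ (L - ℓ i) + 2 ^ (L - ℓ i) := by
            ring
          omega)
      (by
        intro i hi
        have h2 := hp2 i
        have h3 := hp1 (i+1)
        have h4 := hWsucc i
        have e2 : (mm i + 1) * 2 ^ (L - ℓ i) = mm i * 2 ^ (L - ℓ i) + 2 ^ (L - ℓ i) := by
          ring
        omega)
    obtain ⟨i, hi, hdi⟩ := hreg
    have hfinal : d (c 0) (c n) ≤ 2 * lam * σ := by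
      calc d (c 0) (c n) ≤ lam ^ (ℓ i - 0) * d (c i) (c (i+1)) := hdi
        _ = lam ^ (ℓ i) * d (c i) (c (i+1)) := by rw [Nat.sub_zero]
        _ ≤ lam ^ (ℓ i) * e i := by
            apply mul_le_mul_of_nonneg_left _ (pow_nonneg hlam0.le _)
            have : e i = d (c i) (c (i+1)) + ε := rfl
            rw [this]
            linarith
        _ ≤ 2 * lam * σ := hup i hi
    have hσS : σ = (∑ i ∈ Finset.range n, d (c i) (c (i + 1))) + (n:ℝ) * ε := by
      rw [hσdef]
      have : ∀ i ∈ Finset.range n, e i = d (c i) (c (i+1)) + ε := fun i _ => rfl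
      rw [Finset.sum_congr rfl this, Finset.sum_add_distrib, Finset.sum_const,
        Finset.card_range, nsmul_eq_mul]
    have hεε : 2 * lam * ((n:ℝ) * ε) = ε' := by
      rw [hεdef]
      field_simp
    rw [hσS] at hfinal
    calc d (c 0) (c n) ≤ 2 * lam * ((∑ i ∈ Finset.range n, d (c i) (c (i + 1))) + (n:ℝ) * ε) :=
          hfinal
      _ = 2 * lam * (∑ i ∈ Finset.range n, d (c i) (c (i + 1))) + 2 * lam * ((n:ℝ) * ε) := by
          ring
      _ = 2 * lam * (∑ i ∈ Finset.range n, d (c i) (c (i + 1))) + ε' := by rw [hεε]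


theorem frink_schroeder {X : Type*} [Nonempty X]
    (d : X → X → ℝ) (lam : ℝ) (hlam1 : 1 ≤ lam) (hlam2 : lam ≤ 2)
    (hnonneg : ∀ x y, 0 ≤ d x y)
    (heq : ∀ x y, d x y = 0 ↔ x = y)
    (hsymm : ∀ x y, d x y = d y x)
    (htri : ∀ x y z, d x y ≤ lam * max (d x z) (d y z))
    (ρ : X → X → ℝ)
    (hρ : ∀ x y, ρ x y = sInf {t : ℝ | ∃ (n : ℕ) (c : ℕ → X),
      1 ≤ n ∧ c 0 = x ∧ c n = y ∧ t = ∑ i ∈ Finset.range n, d (c i) (c (i + 1))}) :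
    (∀ x y, 0 ≤ ρ x y) ∧
    (∀ x y, ρ x y = 0 ↔ x = y) ∧
    (∀ x y, ρ x y = ρ y x) ∧
    (∀ x y z, ρ x y ≤ ρ x z + ρ z y) ∧
    (∀ x y, (1 / (2 * lam)) * d x y ≤ ρ x y ∧ ρ x y ≤ d x y) := by
  have hlam0 : (0:ℝ) < lam := by linarith
  set S : X → X → Set ℝ := fun x y => {t : ℝ | ∃ (n : ℕ) (c : ℕ → X),
      1 ≤ n ∧ c 0 = x ∧ c n = y ∧ t = ∑ i ∈ Finset.range n, d (c i) (c (i + 1))} with hSdef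
  have hρS : ∀ x y, ρ x y = sInf (S x y) := hρ
  have hmem : ∀ x y, d x y ∈ S x y := by
    intro x y
    refine ⟨1, fun i => if i = 0 then x else y, le_rfl, by simp, by simp, ?_⟩
    rw [Finset.sum_range_one]
    simp
  have hne : ∀ x y, (S x y).Nonempty := fun x y => ⟨d x y, hmem x y⟩
  have hlb0 : ∀ x y, ∀ t ∈ S x y, (0:ℝ) ≤ t := by
    rintro x y t ⟨n, c, hn, h0, hcn, rfl⟩
    exact Finset.sum_nonneg fun i _ => hnonneg _ _
  have hbdd : ∀ x y, BddBelow (S x y) := fun x y => ⟨0, fun t ht => hlb0 x y t ht⟩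
  have hkey : ∀ x y, ∀ t ∈ S x y, d x y ≤ 2 * lam * t := by
    rintro x y t ⟨n, c, hn, h0, hcn, rfl⟩
    rw [← h0, ← hcn]
    exact frink_chain d lam hlam1 hlam2 hnonneg hsymm htri n c hn
  have hρ_le : ∀ x y, ρ x y ≤ d x y := by
    intro x y
    rw [hρS]
    exact csInf_le (hbdd x y) (hmem x y)
  have hρ_nonneg : ∀ x y, 0 ≤ ρ x y := by
    intro x y
    rw [hρS]
    exact le_csInf (hne x y) (hlb0 x y)
  have hρ_ge : ∀ x y, (1 / (2 * lam)) * d x y ≤ ρ x y := by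
    intro x y
    rw [hρS]
    apply le_csInf (hne x y)
    intro t ht
    have h2 := hkey x y t ht
    rw [div_mul_eq_mul_div, one_mul, div_le_iff₀ (by linarith : (0:ℝ) < 2 * lam)]
    linarith
  have hρ_eq : ∀ x y, ρ x y = 0 ↔ x = y := by
    intro x y
    constructor
    · intro h0
      have h1 := hρ_ge x y
      rw [h0] at h1
      have h2 : 0 < 1 / (2 * lam) := by positivity
      have h3 := hnonneg x y
      have h4 : d x y = 0 := by nlinarith
      exact (heq x y).1 h4
    · intro h
      subst h
      have h1 := hρ_le x x
      have h2 := hρ_nonneg x x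
      have h3 : d x x = 0 := (heq x x).2 rfl
      linarith
  have hsub : ∀ x y, S x y ⊆ S y x := by
    rintro x y t ⟨n, c, hn, h0, hcn, rfl⟩
    refine ⟨n, fun i => c (n - i), hn, by simpa using hcn, by simpa using h0, ?_⟩
    rw [← Finset.sum_range_reflect (fun i => d (c i) (c (i+1))) n]
    apply Finset.sum_congr rfl
    intro i hi
    have hi' := Finset.mem_range.1 hi
    have e1 : n - i = (n - 1 - i) + 1 := by omega
    have e2 : n - (i + 1) = n - 1 - i := by omega
    show d (c (n - 1 - i)) (c (n - 1 - i + 1)) = d (c (n - i)) (c (n - (i+1)))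
    rw [e1, e2]
    exact hsymm _ _
  have hρ_symm : ∀ x y, ρ x y = ρ y x := by
    intro x y
    rw [hρS, hρS]
    congr 1
    exact Set.Subset.antisymm (hsub x y) (hsub y x)
  have hconcat : ∀ x z y, ∀ t₁ ∈ S x z, ∀ t₂ ∈ S z y, t₁ + t₂ ∈ S x y := by
    rintro x z y t₁ ⟨n₁, c₁, hn₁, h₁0, h₁n, rfl⟩ t₂ ⟨n₂, c₂, hn₂, h₂0, h₂n, rfl⟩
    refine ⟨n₁ + n₂, fun i => if i < n₁ then c₁ i else c₂ (i - n₁), by omega, ?_, ?_, ?_⟩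
    · simp only [if_pos (show 0 < n₁ by omega)]
      exact h₁0
    · simp only [if_neg (show ¬ (n₁ + n₂ < n₁) by omega)]
      simpa using h₂n
    · have hsplit : ∑ i ∈ Finset.range (n₁ + n₂),
          d ((fun i => if i < n₁ then c₁ i else c₂ (i - n₁)) i)
            ((fun i => if i < n₁ then c₁ i else c₂ (i - n₁)) (i+1))
          = (∑ i ∈ Finset.Ico 0 n₁, d ((fun i => if i < n₁ then c₁ i else c₂ (i - n₁)) i)
            ((fun i => if i < n₁ then c₁ i else c₂ (i - n₁)) (i+1)))
          + ∑ i ∈ Finset.Ico n₁ (n₁ + n₂), d ((fun i => if i < n₁ then c₁ i else c₂ (i - n₁)) i)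
            ((fun i => if i < n₁ then c₁ i else c₂ (i - n₁)) (i+1)) := by
        rw [Finset.range_eq_Ico]
        exact (Finset.sum_Ico_consecutive _ (Nat.zero_le n₁) (by omega)).symm
      rw [hsplit]
      congr 1
      · rw [← Finset.range_eq_Ico]
        apply Finset.sum_congr rfl
        intro i hi
        have hi' := Finset.mem_range.1 hi
        simp only [if_pos hi']
        by_cases h : i + 1 < n₁
        · rw [if_pos h]
        · have hin : i + 1 = n₁ := by omega
          rw [if_neg h, hin, Nat.sub_self, h₂0, h₁n]
    
      · rw [Finset.sum_Ico_eq_sum_range]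
        have e3 : n₁ + n₂ - n₁ = n₂ := by omega
        rw [e3]
        apply Finset.sum_congr rfl
        intro i hi
        simp only [if_neg (show ¬ (n₁ + i < n₁) by omega),
          if_neg (show ¬ (n₁ + i + 1 < n₁) by omega)]
        congr 2
        · omega
        · omega
  have hρ_tri : ∀ x y z, ρ x y ≤ ρ x z + ρ z y := by
    intro x y z
    have h2 : ∀ t₁ ∈ S x z, ρ x y ≤ t₁ + ρ z y := by
      intro t₁ ht₁
      rw [← sub_le_iff_le_add']
      rw [hρS z y]
      apply le_csInf (hne z y)
      intro t₂ ht₂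
      rw [sub_le_iff_le_add']
      rw [hρS x y]
      exact csInf_le (hbdd x y) (hconcat x z y t₁ ht₁ t₂ ht₂)
    rw [← sub_le_iff_le_add]
    conv_rhs => rw [hρS x z]
    apply le_csInf (hne x z)
    intro t₁ ht₁
    rw [sub_le_iff_le_add]
    linarith [h2 t₁ ht₁]
  exact ⟨hρ_nonneg, hρ_eq, hρ_symm, hρ_tri, fun x y => ⟨hρ_ge x y, hρ_le x y⟩⟩
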